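/- The 2D function v₂ defined in polar coordinates on the disk B₃ by v₂(r,θ) = u(r,θ) + 0.5(1 - cos(π(3-r))) for 1 ≤ r ≤ 3 and v₂ = u for 0 < r < 1, where u is the exact radial solution, satisfies v₂ ≥ u on B₃, v₂ = u on B₁, v₂(3,θ) = 0, ∂v₂/∂r(3,θ) = 0, and v₂ has the same coincidence set {v₂ = -1} = B₁ (closure) as u. -/

import Mathlib

open Set Real Metric

section Aux

lemma log3_gt' : 1.0397 < Real.log 3 := by
  have h2 := Real.log_two_gt_d9
  have h89 : Real.log 8 < Real.log 9 := Real.log_lt_log (by norm_num) (by norm_num)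
  have h8 : Real.log 8 = 3 * Real.log 2 := by
    rw [show (8:ℝ) = 2^3 by norm_num, Real.log_pow]; push_cast; ring
  have h9 : Real.log 9 = 2 * Real.log 3 := by
    rw [show (9:ℝ) = 3^2 by norm_num, Real.log_pow]; push_cast; ring
  nlinarith

lemma log3_lt' : Real.log 3 < 1.1 := by
  have h : Real.log (3^10 : ℝ) < 11 := by
    rw [Real.log_lt_iff_lt_exp (by norm_num)]
    have he : Real.exp 1 ^ (11:ℕ) = Real.exp 11 := by
      rw [← Real.exp_nat_mul]; norm_num
    have hp : (2.7182818283:ℝ)^(11:ℕ) < Real.exp 1 ^ (11:ℕ) :=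
      pow_lt_pow_left₀ Real.exp_one_gt_d9 (by norm_num) (by norm_num)
    have h3 : (3:ℝ)^10 < (2.7182818283:ℝ)^(11:ℕ) := by norm_num
    linarith
  rw [Real.log_pow] at h; push_cast at h; linarith

lemma log_lb' {x : ℝ} (hx : 1 ≤ x) :
    8 * (x^2 - 1) / (3*x^2 + 10*x + 3) ≤ Real.log x := by
  have key : ∀ y : ℝ, 1 ≤ y →
      0 ≤ Real.log y - 2*(y-1)/(y+3) - 2*(y-1)/(3*y+1) := by
    intro y hy
    set F : ℝ → ℝ := fun t => Real.log t - 2*(t-1)/(t+3) - 2*(t-1)/(3*t+1) with hF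
    have hF1 : F 1 = 0 := by simp [hF]
    have hmono : MonotoneOn F (Set.Ici 1) := by
      have hderiv : ∀ t ∈ Set.Ici (1:ℝ), HasDerivAt F
          (1/t - 8/(t+3)^2 - 8/(3*t+1)^2) t := by
        intro t ht
        simp only [Set.mem_Ici] at ht
        have ht0 : t ≠ 0 := by positivity
        have h3 : t + 3 ≠ 0 := by positivity
        have h31 : 3*t + 1 ≠ 0 := by positivity
        have hl : HasDerivAt Real.log (1/t) t := by
          simpa using Real.hasDerivAt_log ht0
        have h1 : HasDerivAt (fun t : ℝ => 2*(t-1)/(t+3))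
            ((2*1*(t+3) - 2*(t-1)*1)/(t+3)^2) t := by
          exact (((hasDerivAt_id t).sub_const 1).const_mul 2).div
            ((hasDerivAt_id t).add_const 3) h3
        have h2 : HasDerivAt (fun t : ℝ => 2*(t-1)/(3*t+1))
            ((2*1*(3*t+1) - 2*(t-1)*3)/(3*t+1)^2) t := by
          have hd : HasDerivAt (fun t : ℝ => 3*t+1) (3*1) t := by
            simpa using ((hasDerivAt_id t).const_mul 3).add_const 1
          have h2' : HasDerivAt (fun t : ℝ => 2*(t-1)/(3*t+1))
              ((2*1*(3*t+1) - 2*(t-1)*(3*1))/(3*t+1)^2) t :=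
            (((hasDerivAt_id t).sub_const 1).const_mul 2).div hd h31
          simpa using h2'
        have : HasDerivAt F (1/t - (2*1*(t+3) - 2*(t-1)*1)/(t+3)^2
            - (2*1*(3*t+1) - 2*(t-1)*3)/(3*t+1)^2) t := (hl.sub h1).sub h2
        convert this using 1
        field_simp
        ring
      apply monotoneOn_of_deriv_nonneg (convex_Ici 1)
      · exact ContinuousOn.sub (ContinuousOn.sub
          (Real.continuousOn_log.mono (by intro t ht; simp at ht ⊢; positivity))
          (by fun_prop (disch := intro t ht; simp at ht; positivity)))
          (by fun_prop (disch := intro t ht; simp at ht; positivity))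
      · intro t ht
        rw [interior_Ici] at ht
        exact (hderiv t (Set.mem_Ici.mpr (le_of_lt (Set.mem_Ioi.mp ht)))).differentiableAt.differentiableWithinAt
      · intro t ht
        rw [interior_Ici] at ht
        rw [(hderiv t (Set.mem_Ici.mpr (le_of_lt (Set.mem_Ioi.mp ht)))).deriv]
        have ht1 : (1:ℝ) < t := ht
        have h1 : 0 < t := by linarith
        have heq : 1/t - 8/(t+3)^2 - 8/(3*t+1)^2 =
            (t-1)^2*(9*t^2-2*t+9)/(t*(t+3)^2*(3*t+1)^2) := by
          field_simp; ring
        rw [heq]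
        apply div_nonneg _ (by positivity)
        nlinarith [sq_nonneg (t-1), sq_nonneg (3*t-1)]
    have := hmono (Set.mem_Ici.mpr le_rfl) (Set.mem_Ici.mpr hy) hy
    rw [hF1] at this
    simpa [hF] using this
  have h := key x hx
  have h3 : (0:ℝ) < x + 3 := by linarith
  have h31 : (0:ℝ) < 3*x + 1 := by linarith
  have heq : 8 * (x^2 - 1) / (3*x^2 + 10*x + 3) =
      2*(x-1)/(x+3) + 2*(x-1)/(3*x+1) := by
    field_simp; ring
  rw [heq]; linarith

end Aux

noncomputable def c₁ : ℝ := 9 * Real.log 3 - 4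
noncomputable def c₂ : ℝ := 208 - 216 * Real.log 3 + 9 * (Real.log 3)^2

/-- Radial profile of the exact solution `u` of the biharmonic obstacle problem on `B₃`. -/
noncomputable def uRad (r : ℝ) : ℝ :=
  if r < 1 then -1
  else ((r^2 - 1) * (128 + c₁ * (r^2 - 3)) + 4 * (c₁ - 32 * (1 + r^2)) * Real.log r)
        / (4 * c₂) - 1

/-- Radial profile of the approximation `v₂`. -/
noncomputable def v₂Rad (r : ℝ) : ℝ :=
  uRad r + (if 1 ≤ r then 0.5 * (1 - Real.cos (Real.pi * (3 - r))) else 0)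

/-- The exact solution `u` on the disk `B₃ ⊂ ℝ²`. -/
noncomputable def uB₃ (x : EuclideanSpace ℝ (Fin 2)) : ℝ := uRad ‖x‖

/-- The approximation `v₂` on the disk `B₃ ⊂ ℝ²`. -/
noncomputable def v₂B₃ (x : EuclideanSpace ℝ (Fin 2)) : ℝ := v₂Rad ‖x‖


section Aux2

lemma c₂_neg : c₂ < 0 := by
  have h1 := log3_gt'
  have h2 := log3_lt'
  unfold c₂
  nlinarith

lemma num_nonpos {r : ℝ} (hr1 : 1 ≤ r) (hr3 : r ≤ 3) :
    (r^2 - 1) * (128 + c₁ * (r^2 - 3)) + 4 * (c₁ - 32 * (1 + r^2)) * Real.log r ≤ 0 := by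
  have hL1 := log3_gt'
  have hL2 := log3_lt'
  set c : ℝ := c₁ with hcdef
  have hc : c = 9 * Real.log 3 - 4 := rfl
  have hlb := log_lb' hr1
  have hD : (0:ℝ) < 3*r^2 + 10*r + 3 := by nlinarith
  have hlb' : 8 * (r^2 - 1) ≤ Real.log r * (3*r^2 + 10*r + 3) := by
    rw [div_le_iff₀ hD] at hlb; linarith
  have hC : 4 * (c - 32*(1+r^2)) ≤ 0 := by nlinarith
  have hprod : 0 ≤ (Real.log r * (3*r^2 + 10*r + 3) - 8*(r^2-1)) * (-(4*(c - 32*(1+r^2)))) :=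
    mul_nonneg (by linarith) (by linarith)
  have key : ((r^2 - 1) * (128 + c * (r^2 - 3)) + 4 * (c - 32*(1+r^2)) * Real.log r)
      * (3*r^2 + 10*r + 3) ≤ 0 := by
    have hpoly : (r^2 - 1) * (128 + c * (r^2 - 3)) * (3*r^2 + 10*r + 3)
        + 32 * (r^2 - 1) * (c - 32*(1+r^2)) ≤ 0 := by
      have hT : c*(3*r^2+16*r+23) - 640 ≤ 0 := by nlinarith
      have hfac : (r^2 - 1) * (128 + c * (r^2 - 3)) * (3*r^2 + 10*r + 3)
          + 32 * (r^2 - 1) * (c - 32*(1+r^2))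
          = (r-1)^3*(r+1)*(c*(3*r^2+16*r+23) - 640) := by ring
      rw [hfac]
      apply mul_nonpos_of_nonneg_of_nonpos _ hT
      have h3 : (0:ℝ) ≤ (r-1)^3 := pow_nonneg (by linarith) 3
      nlinarith
    nlinarith [hprod, hpoly]
  by_contra h
  push_neg at h
  nlinarith [mul_pos h hD]

lemma uRad_add_one_nonneg {r : ℝ} (hr1 : 1 ≤ r) (hr3 : r ≤ 3) : 0 ≤ uRad r + 1 := by
  rw [uRad, if_neg (by linarith)]
  have hnum := num_nonpos hr1 hr3
  have hden : 4 * c₂ < 0 := by linarith [c₂_neg]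
  have h := div_nonneg_of_nonpos hnum (le_of_lt hden)
  linarith [h]

lemma uRad_three : uRad 3 = 0 := by
  rw [uRad, if_neg (by norm_num)]
  have hc2 : c₂ ≠ 0 := ne_of_lt c₂_neg
  rw [c₁] at *
  rw [c₂] at hc2 ⊢
  have h : ((3:ℝ)^2 - 1) * (128 + (9 * Real.log 3 - 4) * ((3:ℝ)^2 - 3))
      + 4 * ((9 * Real.log 3 - 4) - 32 * (1 + (3:ℝ)^2)) * Real.log 3
      = 4 * (208 - 216 * Real.log 3 + 9 * (Real.log 3)^2) := by ring
  rw [h, div_self (by intro hh; apply hc2; linarith), sub_self]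

lemma one_sub_cos_pos {θ : ℝ} (h0 : 0 < θ) (h2 : θ < 2 * Real.pi) :
    0 < 1 - Real.cos θ := by
  have hs : 0 < Real.sin (θ/2) :=
    Real.sin_pos_of_pos_of_lt_pi (by linarith) (by linarith)
  have := Real.sin_sq_eq_half_sub (θ/2)
  have h22 : 2 * (θ/2) = θ := by ring
  rw [h22] at this
  nlinarith [sq_nonneg (Real.sin (θ/2))]

lemma v₂Rad_deriv : deriv v₂Rad 3 = 0 := by
  set f : ℝ → ℝ := fun r =>
    ((r^2 - 1) * (128 + c₁ * (r^2 - 3)) + 4 * (c₁ - 32 * (1 + r^2)) * Real.log r)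
      / (4 * c₂) - 1 + 0.5 * (1 - Real.cos (Real.pi * (3 - r))) with hf
  have hev : v₂Rad =ᶠ[nhds (3:ℝ)] f := by
    filter_upwards [Ioo_mem_nhds (by norm_num : (2:ℝ) < 3) (by norm_num : (3:ℝ) < 4)] with r hr
    rw [v₂Rad, uRad, if_neg (by linarith [hr.1]), if_pos (by linarith [hr.1]), hf]
  have hp : HasDerivAt (fun r : ℝ => r^2) ((2:ℕ) * (3:ℝ)^((2:ℕ)-1)) 3 := hasDerivAt_pow 2 3
  have hA : HasDerivAt (fun r : ℝ => (r^2 - 1) * (128 + c₁ * (r^2 - 3)))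
      (((2:ℕ) * (3:ℝ)^((2:ℕ)-1)) * (128 + c₁ * ((3:ℝ)^2 - 3))
        + ((3:ℝ)^2 - 1) * (c₁ * ((2:ℕ) * (3:ℝ)^((2:ℕ)-1)))) 3 :=
    (hp.sub_const 1).mul (((hp.sub_const 3).const_mul c₁).const_add 128)
  have hlog : HasDerivAt Real.log ((3:ℝ)⁻¹) 3 := Real.hasDerivAt_log (by norm_num)
  have hB : HasDerivAt (fun r : ℝ => 4 * (c₁ - 32 * (1 + r^2)) * Real.log r)
      ((4 * (-(32 * ((2:ℕ) * (3:ℝ)^((2:ℕ)-1))))) * Real.log 3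
        + 4 * (c₁ - 32 * (1 + (3:ℝ)^2)) * (3:ℝ)⁻¹) 3 := by
    have h1 : HasDerivAt (fun r : ℝ => 4 * (c₁ - 32 * (1 + r^2)))
        (4 * (-(32 * ((2:ℕ) * (3:ℝ)^((2:ℕ)-1))))) 3 :=
      (((hp.const_add 1).const_mul 32).const_sub c₁).const_mul 4
    exact h1.mul hlog
  have hinner : HasDerivAt (fun r : ℝ => Real.pi * (3 - r)) (Real.pi * (0 - 1)) 3 :=
    ((hasDerivAt_const (3:ℝ) (3:ℝ)).sub (hasDerivAt_id 3)).const_mul Real.pi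
  have hcos : HasDerivAt (fun r : ℝ => Real.cos (Real.pi * (3 - r)))
      (-Real.sin (Real.pi * (3 - (3:ℝ))) * (Real.pi * (0 - 1))) 3 :=
    hinner.cos
  have hC : HasDerivAt (fun r : ℝ => 0.5 * (1 - Real.cos (Real.pi * (3 - r))))
      (0.5 * (-(-Real.sin (Real.pi * (3 - (3:ℝ))) * (Real.pi * (0 - 1))))) 3 :=
    (hcos.const_sub 1).const_mul 0.5
  have hfd : HasDerivAt f
      ((((2:ℕ) * (3:ℝ)^((2:ℕ)-1)) * (128 + c₁ * ((3:ℝ)^2 - 3))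
        + ((3:ℝ)^2 - 1) * (c₁ * ((2:ℕ) * (3:ℝ)^((2:ℕ)-1)))
        + ((4 * (-(32 * ((2:ℕ) * (3:ℝ)^((2:ℕ)-1))))) * Real.log 3
          + 4 * (c₁ - 32 * (1 + (3:ℝ)^2)) * (3:ℝ)⁻¹)) / (4 * c₂)
        + 0.5 * (-(-Real.sin (Real.pi * (3 - (3:ℝ))) * (Real.pi * (0 - 1))))) 3 :=
    (((hA.add hB).div_const (4 * c₂)).sub_const 1).add hC
  have hval : (((2:ℕ) * (3:ℝ)^((2:ℕ)-1)) * (128 + c₁ * ((3:ℝ)^2 - 3))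
        + ((3:ℝ)^2 - 1) * (c₁ * ((2:ℕ) * (3:ℝ)^((2:ℕ)-1)))
        + ((4 * (-(32 * ((2:ℕ) * (3:ℝ)^((2:ℕ)-1))))) * Real.log 3
          + 4 * (c₁ - 32 * (1 + (3:ℝ)^2)) * (3:ℝ)⁻¹)) / (4 * c₂)
        + 0.5 * (-(-Real.sin (Real.pi * (3 - (3:ℝ))) * (Real.pi * (0 - 1)))) = 0 := by
    have hsin : Real.sin (Real.pi * (3 - (3:ℝ))) = 0 := by norm_num
    rw [hsin]
    have hnum : (((2:ℕ) * (3:ℝ)^((2:ℕ)-1)) * (128 + c₁ * ((3:ℝ)^2 - 3))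
        + ((3:ℝ)^2 - 1) * (c₁ * ((2:ℕ) * (3:ℝ)^((2:ℕ)-1)))
        + ((4 * (-(32 * ((2:ℕ) * (3:ℝ)^((2:ℕ)-1))))) * Real.log 3
          + 4 * (c₁ - 32 * (1 + (3:ℝ)^2)) * (3:ℝ)⁻¹)) = 0 := by
      rw [c₁]
      push_cast
      ring_nf
    rw [hnum]
    norm_num
  rw [hval] at hfd
  exact (hfd.congr_of_eventuallyEq hev).deriv

end Aux2
/-- `v₂ ≥ u` on `B₃`, `v₂ = u` on `B₁`, `v₂` vanishes together with its normal
(radial) derivative on the boundary `r = 3`, and `v₂` has the same coincidence set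
`{v₂ = -1} = closure of B₁` as `u`. -/
theorem v₂_properties :
    (∀ x : EuclideanSpace ℝ (Fin 2), x ∈ closedBall (0 : EuclideanSpace ℝ (Fin 2)) 3 →
      uB₃ x ≤ v₂B₃ x) ∧
    (∀ x : EuclideanSpace ℝ (Fin 2), x ∈ ball (0 : EuclideanSpace ℝ (Fin 2)) 1 →
      v₂B₃ x = uB₃ x) ∧
    (∀ x : EuclideanSpace ℝ (Fin 2), ‖x‖ = 3 → v₂B₃ x = 0) ∧
    deriv v₂Rad 3 = 0 ∧
    {x ∈ closedBall (0 : EuclideanSpace ℝ (Fin 2)) 3 | v₂B₃ x = -1}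
      = closedBall (0 : EuclideanSpace ℝ (Fin 2)) 1 := by
  refine ⟨?_, ?_, ?_, v₂Rad_deriv, ?_⟩
  · intro x _
    rw [uB₃, v₂B₃, v₂Rad]
    split_ifs with h
    · nlinarith [Real.cos_le_one (Real.pi * (3 - ‖x‖))]
    · simp
  · intro x hx
    rw [mem_ball, dist_zero_right] at hx
    rw [v₂B₃, uB₃, v₂Rad, if_neg (by linarith), add_zero]
  · intro x hx
    rw [v₂B₃, hx, v₂Rad, if_pos (by norm_num), uRad_three]
    have h0 : Real.pi * (3 - (3:ℝ)) = 0 := by ring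
    rw [h0, Real.cos_zero]
    norm_num
  · ext x
    simp only [mem_setOf_eq, mem_closedBall, dist_zero_right]
    constructor
    · rintro ⟨hx3, hx⟩
      by_contra h
      push_neg at h
      rw [v₂B₃, v₂Rad, if_pos (le_of_lt h)] at hx
      rcases lt_or_eq_of_le hx3 with h3 | h3
      · have h1 := uRad_add_one_nonneg (le_of_lt h) (le_of_lt h3)
        have h2 : 0 < 1 - Real.cos (Real.pi * (3 - ‖x‖)) := by
          apply one_sub_cos_pos
          · exact mul_pos Real.pi_pos (by linarith)
          · nlinarith [Real.pi_pos]
        nlinarith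
      · rw [h3, uRad_three] at hx
        have h0 : Real.pi * (3 - (3:ℝ)) = 0 := by ring
        rw [h0, Real.cos_zero] at hx
        norm_num at hx
    · intro h1
      refine ⟨by linarith, ?_⟩
      rw [v₂B₃, v₂Rad]
      rcases lt_or_eq_of_le h1 with h | h
      · rw [if_neg (by linarith), uRad, if_pos h, add_zero]
      · rw [h, if_pos le_rfl, uRad, if_neg (by norm_num)]
        have hcos : Real.cos (Real.pi * (3 - (1:ℝ))) = 1 := by
          rw [show Real.pi * (3 - (1:ℝ)) = 2 * Real.pi by ring, Real.cos_two_pi]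
        rw [hcos]
        norm_num [Real.log_one]
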